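/- Assume K ∈ L(H,H) and K ∈ L(C_b(Ω), C_b(Ω)). Then the kernel EDMD approximant \hat{K} = S_X K S_X satisfies the operator-norm error bound ‖K − \hat{K}‖_{H→C_b} ≤ (1 + ‖K‖_{H→H}) · ‖I − S_X‖_{H→C_b}, i.e., ‖Kf − S_X K S_X f‖_∞ ≤ (1 + ‖K‖_{H→H}) · ‖I − S_X‖_{H→C_b} · ‖f‖_H for all f ∈ H. -/

import Mathlib

open MeasureTheory ProbabilityTheory
open scoped RealInnerProductSpace

/-- (Deterministic error bound.) If the Koopman operator is bounded on
the RKHS `H` (with bound `CK`) and maps `C_b(Ω)` into `C_b(Ω)`, then the kernel EDMD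
approximant `K̂ = S_X K S_X` satisfies the pointwise error bound
`‖Kf − S_X K S_X f‖_∞ ≤ (1 + CK) · CS · ‖f‖_H`, where `CS` bounds `‖I − S_X‖_{H→C_b}`. -/
theorem kEDMD_deterministic_error_bound
    {n : ℕ} (hn : 1 ≤ n)
    (Ω : Set (EuclideanSpace ℝ (Fin n)))
    (hΩne : Ω.Nonempty) (hΩopen : IsOpen Ω) (hΩbdd : Bornology.IsBounded Ω)
    (ρ : ProbabilityTheory.Kernel (EuclideanSpace ℝ (Fin n)) (EuclideanSpace ℝ (Fin n)))
    [IsMarkovKernel ρ] (hρΩ : ∀ x ∈ Ω, ρ x Ω = 1)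
    {H : Type*} [NormedAddCommGroup H] [InnerProductSpace ℝ H] [CompleteSpace H]
    -- `H` is an RKHS of functions on `Ω` with features `Φ` and bounded continuous kernel
    (ev : H →ₗ[ℝ] (EuclideanSpace ℝ (Fin n) → ℝ))
    (Φ : EuclideanSpace ℝ (Fin n) → H)
    (hrepr : ∀ (f : H), ∀ x ∈ Ω, ev f x = ⟪f, Φ x⟫)
    (hΦcont : ContinuousOn Φ Ω)
    (Mk : ℝ) (hMk : ∀ x ∈ Ω, ∀ y ∈ Ω, |⟪Φ x, Φ y⟫| ≤ Mk)
    -- pairwise distinct data points `X = {x 1, …, x d} ⊆ Ω`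
    (d : ℕ) (hd : 1 ≤ d) (x : Fin d → EuclideanSpace ℝ (Fin n))
    (hxΩ : ∀ i, x i ∈ Ω) (hxinj : Function.Injective x)
    -- `S` is the `H`-orthogonal projection onto `V_X = span{Φ_{x_i}}`
    (S : H →L[ℝ] H)
    (hSmem : ∀ f : H, S f ∈ Submodule.span ℝ (Set.range fun i => Φ (x i)))
    (hSorth : ∀ f : H, ∀ g ∈ Submodule.span ℝ (Set.range fun i => Φ (x i)),
      ⟪f - S f, g⟫ = 0)
    -- the Koopman operator `K ∈ L(H,H)` acts by `(Kf)(x) = ∫_Ω f dρ_x` …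
    (Koop : H →L[ℝ] H)
    (hKoop : ∀ (f : H), ∀ z ∈ Ω, ev (Koop f) z = ∫ y in Ω, ev f y ∂(ρ z))
    -- … with `H → H` operator-norm bound `CK` …
    (CK : ℝ) (hCK : ∀ f : H, ‖Koop f‖ ≤ CK * ‖f‖)
    -- … and `K ∈ L(C_b(Ω), C_b(Ω))`
    (hKCb : ∀ g : EuclideanSpace ℝ (Fin n) → ℝ, ContinuousOn g Ω →
      (∃ M, ∀ y ∈ Ω, |g y| ≤ M) →
      ContinuousOn (fun z => ∫ y in Ω, g y ∂(ρ z)) Ω)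
    -- `CS` bounds the projection error `‖I − S_X‖_{H → C_b}`
    (CS : ℝ) (hCS : ∀ g : H, ∀ z ∈ Ω, |ev g z - ev (S g) z| ≤ CS * ‖g‖) :
    ∀ f : H, ∀ z ∈ Ω,
      |ev (Koop f) z - ev (S (Koop (S f))) z| ≤ (1 + CK) * CS * ‖f‖ := by
  intro f z hz
  -- norm of projection is ≤ 1
  have hSle : ∀ g : H, ‖S g‖ ≤ ‖g‖ := by
    intro g
    have h0 : ⟪g - S g, S g⟫ = 0 := hSorth g (S g) (hSmem g)
    have h1 : ⟪g, S g⟫ = ‖S g‖ ^ 2 := by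
      have := h0
      rw [inner_sub_left] at this
      have h2 : ⟪g, S g⟫ = ⟪S g, S g⟫ := by linarith
      rw [h2, real_inner_self_eq_norm_sq]
    have h3 : ‖S g‖ ^ 2 ≤ ‖g‖ * ‖S g‖ := by
      rw [← h1]
      exact (real_inner_le_norm g (S g))
    rcases eq_or_lt_of_le (norm_nonneg (S g)) with h4 | h4
    · linarith [norm_nonneg g]
    · exact le_of_mul_le_mul_right (by rwa [sq] at h3) h4
  by_cases hf0 : f = 0
  · subst hf0
    simp [map_zero]
  have hfpos : 0 < ‖f‖ := norm_pos_iff.mpr hf0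
  have hCSnn : 0 ≤ CS := by
    have h := hCS f z hz
    have h' : (0 : ℝ) ≤ CS * ‖f‖ := le_trans (abs_nonneg _) h
    nlinarith
  have hCKnn : 0 ≤ CK := by
    have h := hCK f
    have h' : (0 : ℝ) ≤ CK * ‖f‖ := le_trans (norm_nonneg _) h
    nlinarith
  -- first term
  have hterm1 : |ev (Koop f) z - ev (Koop (S f)) z| ≤ CS * ‖f‖ := by
    have heq : ev (Koop f) z - ev (Koop (S f)) z = ev (Koop (f - S f)) z := by
      rw [map_sub Koop, map_sub ev]; rfl
    rw [heq, hKoop (f - S f) z hz]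
    have hμ : (ρ z) Ω < ⊤ := lt_of_le_of_lt prob_le_one (by norm_num)
    have hbound : ∀ᵐ y ∂(ρ z), y ∈ Ω → ‖ev (f - S f) y‖ ≤ CS * ‖f‖ := by
      refine Filter.Eventually.of_forall (fun y hy => ?_)
      have : ev (f - S f) y = ev f y - ev (S f) y := by rw [map_sub ev]; rfl
      rw [Real.norm_eq_abs, this]
      exact hCS f y hy
    have := norm_setIntegral_le_of_norm_le_const_ae' hμ hbound
    calc |∫ y in Ω, ev (f - S f) y ∂(ρ z)|
        ≤ (CS * ‖f‖) * ((ρ z) Ω).toReal := this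
      _ = CS * ‖f‖ := by rw [hρΩ z hz]; simp
  -- second term
  have hterm2 : |ev (Koop (S f)) z - ev (S (Koop (S f))) z| ≤ CK * CS * ‖f‖ := by
    calc |ev (Koop (S f)) z - ev (S (Koop (S f))) z|
        ≤ CS * ‖Koop (S f)‖ := hCS (Koop (S f)) z hz
      _ ≤ CS * (CK * ‖S f‖) := by
          exact mul_le_mul_of_nonneg_left (hCK (S f)) hCSnn
      _ ≤ CS * (CK * ‖f‖) := by
          exact mul_le_mul_of_nonneg_left
            (mul_le_mul_of_nonneg_left (hSle f) hCKnn) hCSnn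
      _ = CK * CS * ‖f‖ := by ring
  calc |ev (Koop f) z - ev (S (Koop (S f))) z|
      ≤ |ev (Koop f) z - ev (Koop (S f)) z|
        + |ev (Koop (S f)) z - ev (S (Koop (S f))) z| := abs_sub_le _ _ _
    _ ≤ CS * ‖f‖ + CK * CS * ‖f‖ := add_le_add hterm1 hterm2
    _ = (1 + CK) * CS * ‖f‖ := by ring
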